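/- The quadratic form x² + 2y² + 2z² over ℤ represents every positive integer except those of the form 2^e·u with e even and u ≡ 7 (mod 8). In particular its smallest non-represented positive integer (truant) is 7. -/

import Mathlib

/-- ternary quadratic form with Gram matrix [[a,d,e],[d,b,f],[e,f,c]] -/
def Q3 (a b c d e f x y z : ℤ) : ℤ :=
  a*x^2+b*y^2+c*z^2+2*d*x*y+2*e*x*z+2*f*y*z
def D3 (a b c d e f : ℤ) : ℤ := a*b*c+2*d*e*f - a*f^2 - b*e^2 - c*d^2
def Bil3 (a b c d e f u1 u2 u3 v1 v2 v3 : ℤ) : ℤ :=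
  a*u1*v1 + b*u2*v2 + c*u3*v3 + d*(u1*v2+u2*v1) + e*(u1*v3+u3*v1) + f*(u2*v3+u3*v2)
def Q2 (A F C y z : ℤ) : ℤ := A*y^2 + 2*F*y*z + C*z^2

def Repr3 (a b c d e f : ℤ) : Prop :=
  ∃ p1 p2 p3 q1 q2 q3 r1 r2 r3 : ℤ, ∀ x y z : ℤ,
    Q3 a b c d e f x y z = (p1*x+p2*y+p3*z)^2 + (q1*x+q2*y+q3*z)^2 + (r1*x+r2*y+r3*z)^2

set_option maxHeartbeats 1000000

theorem D3_sub (a b c d e f m11 m12 m13 m21 m22 m23 m31 m32 m33 : ℤ) :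
    D3 (Q3 a b c d e f m11 m21 m31) (Q3 a b c d e f m12 m22 m32) (Q3 a b c d e f m13 m23 m33)
      (Bil3 a b c d e f m11 m21 m31 m12 m22 m32)
      (Bil3 a b c d e f m11 m21 m31 m13 m23 m33)
      (Bil3 a b c d e f m12 m22 m32 m13 m23 m33)
    = (m11*(m22*m33-m23*m32) - m12*(m21*m33-m23*m31) + m13*(m21*m32-m22*m31))^2
      * D3 a b c d e f := by
  unfold D3 Q3 Bil3; ring

theorem Q3_sub (a b c d e f m11 m12 m13 m21 m22 m23 m31 m32 m33 X Y Z : ℤ) :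
    Q3 a b c d e f (m11*X+m12*Y+m13*Z) (m21*X+m22*Y+m23*Z) (m31*X+m32*Y+m33*Z) =
    Q3 (Q3 a b c d e f m11 m21 m31) (Q3 a b c d e f m12 m22 m32) (Q3 a b c d e f m13 m23 m33)
      (Bil3 a b c d e f m11 m21 m31 m12 m22 m32)
      (Bil3 a b c d e f m11 m21 m31 m13 m23 m33)
      (Bil3 a b c d e f m12 m22 m32 m13 m23 m33) X Y Z := by
  unfold Q3 Bil3; ring

/-- if M has det 1 and M v = 0 then v = 0 -/
theorem inj3 {m11 m12 m13 m21 m22 m23 m31 m32 m33 x y z : ℤ}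
    (hdet : m11*(m22*m33-m23*m32) - m12*(m21*m33-m23*m31) + m13*(m21*m32-m22*m31) = 1)
    (h1 : m11*x+m12*y+m13*z = 0) (h2 : m21*x+m22*y+m23*z = 0)
    (h3 : m31*x+m32*y+m33*z = 0) : x = 0 ∧ y = 0 ∧ z = 0 := by
  refine ⟨?_, ?_, ?_⟩
  · linear_combination (m22*m33-m23*m32)*h1 + (m13*m32-m12*m33)*h2 + (m12*m23-m13*m22)*h3 - x*hdet
  · linear_combination (m23*m31-m21*m33)*h1 + (m11*m33-m13*m31)*h2 + (m13*m21-m11*m23)*h3 - y*hdet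
  · linear_combination (m21*m32-m22*m31)*h1 + (m12*m31-m11*m32)*h2 + (m11*m22-m12*m21)*h3 - z*hdet

theorem repr3_transport {a b c d e f m11 m12 m13 m21 m22 m23 m31 m32 m33 : ℤ}
    (hdet : m11*(m22*m33-m23*m32) - m12*(m21*m33-m23*m31) + m13*(m21*m32-m22*m31) = 1)
    (h : Repr3 (Q3 a b c d e f m11 m21 m31) (Q3 a b c d e f m12 m22 m32)
      (Q3 a b c d e f m13 m23 m33)
      (Bil3 a b c d e f m11 m21 m31 m12 m22 m32)
      (Bil3 a b c d e f m11 m21 m31 m13 m23 m33)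
      (Bil3 a b c d e f m12 m22 m32 m13 m23 m33)) : Repr3 a b c d e f := by
  obtain ⟨p1, p2, p3, q1, q2, q3, r1, r2, r3, hP⟩ := h
  refine ⟨p1*(m22*m33-m23*m32) + p2*(m23*m31-m21*m33) + p3*(m21*m32-m22*m31),
          p1*(m13*m32-m12*m33) + p2*(m11*m33-m13*m31) + p3*(m12*m31-m11*m32),
          p1*(m12*m23-m13*m22) + p2*(m13*m21-m11*m23) + p3*(m11*m22-m12*m21),
          q1*(m22*m33-m23*m32) + q2*(m23*m31-m21*m33) + q3*(m21*m32-m22*m31),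
          q1*(m13*m32-m12*m33) + q2*(m11*m33-m13*m31) + q3*(m12*m31-m11*m32),
          q1*(m12*m23-m13*m22) + q2*(m13*m21-m11*m23) + q3*(m11*m22-m12*m21),
          r1*(m22*m33-m23*m32) + r2*(m23*m31-m21*m33) + r3*(m21*m32-m22*m31),
          r1*(m13*m32-m12*m33) + r2*(m11*m33-m13*m31) + r3*(m12*m31-m11*m32),
          r1*(m12*m23-m13*m22) + r2*(m13*m21-m11*m23) + r3*(m11*m22-m12*m21), ?_⟩
  intro x y z
  have key := hP ((m22*m33-m23*m32)*x + (m13*m32-m12*m33)*y + (m12*m23-m13*m22)*z)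
    ((m23*m31-m21*m33)*x + (m11*m33-m13*m31)*y + (m13*m21-m11*m23)*z)
    ((m21*m32-m22*m31)*x + (m12*m31-m11*m32)*y + (m11*m22-m12*m21)*z)
  simp only [Q3, Bil3] at key ⊢
  linear_combination key - (a*x^2+b*y^2+c*z^2+2*d*x*y+2*e*x*z+2*f*y*z) *
    ((m11*(m22*m33-m23*m32) - m12*(m21*m33-m23*m31) + m13*(m21*m32-m22*m31)) + 1) * hdet

/-- rounding: find t with |w + a t| ≤ a/2 -/
theorem exists_round (a w : ℤ) (ha : 0 < a) :
    ∃ t : ℤ, -a ≤ 2*(w + a*t) ∧ 2*(w + a*t) ≤ a := by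
  have h3 : w % a = w - a * (w / a) := by rw [Int.emod_def]
  have h1 : 0 ≤ w % a := Int.emod_nonneg w (ne_of_gt ha)
  have h2 : w % a < a := Int.emod_lt_of_pos w ha
  by_cases hc : 2*(w % a) ≤ a
  · refine ⟨-(w / a), ?_, ?_⟩ <;>
    · have : w + a * (-(w/a)) = w % a := by rw [h3]; ring
      rw [this]; linarith
  · refine ⟨-(w / a) - 1, ?_, ?_⟩ <;>
    · have : w + a * (-(w/a) - 1) = w % a - a := by rw [h3]; ring
      rw [this]; linarith

/-- binary "Hermite bound": some nonzero value v of the form satisfies 3 v² ≤ 4 det -/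
theorem binmin : ∀ (k : ℕ) (A F C : ℤ), A ≤ (k:ℤ) → 0 < A → 0 < A*C - F^2 →
    ∃ y z : ℤ, ¬(y = 0 ∧ z = 0) ∧ 3*(Q2 A F C y z)^2 ≤ 4*(A*C - F^2) := by
  intro k
  induction k with
  | zero => intro A F C hk hA _; exfalso; omega
  | succ k ih =>
    intro A F C hk hA hD
    obtain ⟨t, ht1, ht2⟩ := exists_round A F hA
    set F' : ℤ := F + A*t with hF'
    set S' : ℤ := A*t^2 + 2*F*t + C with hS'
    have hAS : A*S' = F'^2 + (A*C - F^2) := by rw [hF', hS']; ring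
    have hS'pos : 0 < S' := by nlinarith [sq_nonneg F']
    by_cases hc : A ≤ S'
    · refine ⟨1, 0, by simp, ?_⟩
      have hv : Q2 A F C 1 0 = A := by unfold Q2; ring
      rw [hv]
      nlinarith [sq_nonneg (2*F' - A), sq_nonneg (2*F' + A)]
    · push_neg at hc
      have hrec := ih S' (-F') A (by omega) hS'pos (by nlinarith)
      obtain ⟨y, z, hnz, hval⟩ := hrec
      refine ⟨z - t*y, -y, ?_, ?_⟩
      · rintro ⟨h1, h2⟩
        have hy : y = 0 := by omega
        subst hy
        exact hnz ⟨rfl, by simpa using h1⟩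
      have hEq : Q2 A F C (z - t*y) (-y) = Q2 S' (-F') A y z := by
        rw [hS', hF']; unfold Q2; ring
      rw [hEq]
      have hdeq : S'*A - (-F')^2 = A*C - F^2 := by rw [hS', hF']; ring
      rw [hdeq] at hval; exact hval

/-- binary forms of determinant 1 are sums of two squares of linear forms -/
theorem binrep : ∀ (k : ℕ) (A F C : ℤ), A ≤ (k:ℤ) → 0 < A → A*C - F^2 = 1 →
    ∃ p q r s : ℤ, ∀ y z : ℤ, Q2 A F C y z = (p*y+q*z)^2 + (r*y+s*z)^2 := by
  intro k
  induction k with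
  | zero => intro A F C hk hA _; exfalso; omega
  | succ k ih =>
    intro A F C hk hA hD
    obtain ⟨t, ht1, ht2⟩ := exists_round A F hA
    set F' : ℤ := F + A*t with hF'
    set S' : ℤ := A*t^2 + 2*F*t + C with hS'
    have hAS : A*S' = F'^2 + 1 := by rw [hF', hS', ← hD]; ring
    have hS'pos : 0 < S' := by nlinarith [sq_nonneg F']
    by_cases hc : A ≤ S'
    · have hA1 : A = 1 := by nlinarith [sq_nonneg (2*F' - A), sq_nonneg (2*F' + A)]
      have hF0 : F' = 0 := by nlinarith
      have hS1 : S' = 1 := by rw [hA1, hF0] at hAS; omega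
      refine ⟨1, -t, 0, 1, ?_⟩
      intro y z
      have : Q2 A F C y z = Q2 A F' S' (y - t*z) z := by rw [hF', hS']; unfold Q2; ring
      rw [this, hA1, hF0, hS1]; unfold Q2; ring
    · push_neg at hc
      obtain ⟨p, q, r, s, hrec⟩ := ih S' (-F') A (by omega) hS'pos (by rw [hF', hS', ← hD]; ring)
      refine ⟨q, -p - q*t, s, -r - s*t, ?_⟩
      intro y z
      have h1 := hrec (-z) (y - t*z)
      have : Q2 A F C y z = Q2 S' (-F') A (-z) (y - t*z) := by rw [hF', hS']; unfold Q2; ring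
      rw [this, h1]; ring

theorem bc3 (v1 v2 v3 : ℤ) (hco : Int.gcd v1 (Int.gcd v2 v3 : ℤ) = 1) :
    ∃ m12 m13 m22 m23 m32 m33 : ℤ,
      v1*(m22*m33-m23*m32) - m12*(v2*m33-m23*v3) + m13*(v2*m32-m22*v3) = 1 := by
  by_cases hg : Int.gcd v2 v3 = 0
  · have hv1 : v1 = 1 ∨ v1 = -1 := by
      have : v1.natAbs = 1 := by
        have := hco; rw [hg] at this; simpa [Int.gcd] using this
      omega
    refine ⟨0, 0, v1, 0, 0, 1, ?_⟩
    rcases hv1 with h | h <;> rw [h] <;> ring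
  · have hgz : ((Int.gcd v2 v3 : ℤ)) ≠ 0 := by exact_mod_cast hg
    obtain ⟨n2, hn2⟩ : ((Int.gcd v2 v3 : ℤ)) ∣ v2 := Int.gcd_dvd_left v2 v3
    obtain ⟨n3, hn3⟩ : ((Int.gcd v2 v3 : ℤ)) ∣ v3 := Int.gcd_dvd_right v2 v3
    have hb : ((Int.gcd v2 v3 : ℤ)) = v2 * Int.gcdA v2 v3 + v3 * Int.gcdB v2 v3 :=
      Int.gcd_eq_gcd_ab v2 v3
    have hxy : n2 * Int.gcdA v2 v3 + n3 * Int.gcdB v2 v3 = 1 := by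
      apply mul_left_cancel₀ hgz
      linear_combination (-1:ℤ)*hb - Int.gcdA v2 v3 * hn2 - Int.gcdB v2 v3 * hn3
    have hb2 : (1:ℤ) = v1 * Int.gcdA v1 (Int.gcd v2 v3 : ℤ)
        + (Int.gcd v2 v3 : ℤ) * Int.gcdB v1 (Int.gcd v2 v3 : ℤ) := by
      have := Int.gcd_eq_gcd_ab v1 ((Int.gcd v2 v3 : ℤ))
      rw [hco] at this; exact_mod_cast this
    refine ⟨-Int.gcdB v1 (Int.gcd v2 v3 : ℤ), 0,
      Int.gcdA v1 (Int.gcd v2 v3 : ℤ) * n2, -Int.gcdB v2 v3,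
      Int.gcdA v1 (Int.gcd v2 v3 : ℤ) * n3, Int.gcdA v2 v3, ?_⟩
    linear_combination (v1 * Int.gcdA v1 (Int.gcd v2 v3 : ℤ)) * hxy
      - Int.gcdB v1 (Int.gcd v2 v3 : ℤ) * hb - hb2

theorem aQ3_decomp (a b c d e f x y z : ℤ) :
    a * Q3 a b c d e f x y z
      = (a*x + d*y + e*z)^2 + Q2 (a*b-d^2) (a*f-d*e) (a*c-e^2) y z := by
  unfold Q3 Q2; ring

theorem detB_identity (a b c d e f : ℤ) :
    (a*b-d^2)*(a*c-e^2) - (a*f-d*e)^2 = a * D3 a b c d e f := by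
  unfold D3; ring

theorem Q3_shear (a b c d e f t s x y z : ℤ) :
    Q3 a (a*t^2+2*d*t+b) (a*s^2+2*e*s+c) (d+a*t) (e+a*s) (a*t*s+d*s+e*t+f) x y z
      = Q3 a b c d e f (x + t*y + s*z) y z := by unfold Q3; ring

theorem D3_shear (a b c d e f t s : ℤ) :
    D3 a (a*t^2+2*d*t+b) (a*s^2+2*e*s+c) (d+a*t) (e+a*s) (a*t*s+d*s+e*t+f)
      = D3 a b c d e f := by unfold D3; ring

theorem repr3_shear (a b c d e f t s : ℤ)
    (h : Repr3 a (a*t^2+2*d*t+b) (a*s^2+2*e*s+c) (d+a*t) (e+a*s) (a*t*s+d*s+e*t+f)) :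
    Repr3 a b c d e f := by
  obtain ⟨p1,p2,p3,q1,q2,q3,r1,r2,r3,hP⟩ := h
  refine ⟨p1, p2 - p1*t, p3 - p1*s, q1, q2 - q1*t, q3 - q1*s, r1, r2 - r1*t, r3 - r1*s, ?_⟩
  intro x y z
  have h1 := hP (x - t*y - s*z) y z
  rw [Q3_shear] at h1
  have h2 : (x - t*y - s*z) + t*y + s*z = x := by ring
  rw [h2] at h1; rw [h1]; ring

theorem tern_main : ∀ (k : ℕ) (a b c d e f : ℤ),
    (∀ x y z : ℤ, ¬(x = 0 ∧ y = 0 ∧ z = 0) → 0 < Q3 a b c d e f x y z) →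
    D3 a b c d e f = 1 → a ≤ (k:ℤ) → Repr3 a b c d e f := by
  intro k
  induction k with
  | zero =>
    intro a b c d e f hpos _ hk
    exfalso
    have h1 := hpos 1 0 0 (by simp)
    have h2 : Q3 a b c d e f 1 0 0 = a := by unfold Q3; ring
    rw [h2] at h1; omega
  | succ k ih =>
    intro a b c d e f hpos hD hk
    have ha : 0 < a := by
      have h1 := hpos 1 0 0 (by simp)
      have h2 : Q3 a b c d e f 1 0 0 = a := by unfold Q3; ring
      rw [h2] at h1; exact h1
    obtain ⟨t, ht1, ht2⟩ := exists_round a d ha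
    obtain ⟨s, hs1, hs2⟩ := exists_round a e ha
    suffices H : ∀ b' c' d' e' f' : ℤ,
        (∀ x y z : ℤ, ¬(x = 0 ∧ y = 0 ∧ z = 0) → 0 < Q3 a b' c' d' e' f' x y z) →
        D3 a b' c' d' e' f' = 1 → -a ≤ 2*d' → 2*d' ≤ a → -a ≤ 2*e' → 2*e' ≤ a →
        Repr3 a b' c' d' e' f' by
      apply repr3_shear a b c d e f t s
      apply H
      · intro x y z hnz
        rw [Q3_shear]
        apply hpos
        rintro ⟨h1, h2, h3⟩
        subst h2; subst h3
        simp at h1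
        exact hnz ⟨h1, rfl, rfl⟩
      · rw [D3_shear]; exact hD
      · linarith
      · linarith
      · linarith
      · linarith
    intro b' c' d' e' f' hpos' hD' hd1 hd2 he1 he2
    -- the associated binary form B = a·(quotient)
    have hBpos : ∀ y z : ℤ, ¬(y = 0 ∧ z = 0) →
        0 < Q2 (a*b'-d'^2) (a*f'-d'*e') (a*c'-e'^2) y z := by
      intro y z hnz
      have h0 := hpos' (-(d'*y+e'*z)) (a*y) (a*z) (by
        rintro ⟨h1, h2, h3⟩
        have hy : y = 0 := by
          rcases mul_eq_zero.mp h2 with h | h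
          · omega
          · exact h
        have hz : z = 0 := by
          rcases mul_eq_zero.mp h3 with h | h
          · omega
          · exact h
        exact hnz ⟨hy, hz⟩)
      have hkey : a * Q3 a b' c' d' e' f' (-(d'*y+e'*z)) (a*y) (a*z)
          = a^2 * Q2 (a*b'-d'^2) (a*f'-d'*e') (a*c'-e'^2) y z := by
        unfold Q3 Q2; ring
      nlinarith [h0, ha]
    have hA : 0 < a*b' - d'^2 := by
      have h1 := hBpos 1 0 (by simp)
      have h2 : Q2 (a*b'-d'^2) (a*f'-d'*e') (a*c'-e'^2) 1 0 = a*b'-d'^2 := by unfold Q2; ring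
      rw [h2] at h1; exact h1
    have hDetB : (a*b'-d'^2)*(a*c'-e'^2) - (a*f'-d'*e')^2 = a := by
      rw [detB_identity, hD']; ring
    obtain ⟨y₀, z₀, hnz0, hval⟩ := binmin (a*b'-d'^2).toNat (a*b'-d'^2) (a*f'-d'*e')
      (a*c'-e'^2) (Int.self_le_toNat _) hA (by rw [hDetB]; exact ha)
    rw [hDetB] at hval
    obtain ⟨x', hx1, hx2⟩ := exists_round a (d'*y₀ + e'*z₀) ha
    have hkeyA := aQ3_decomp a b' c' d' e' f' x' y₀ z₀
    have hw : 0 < Q3 a b' c' d' e' f' x' y₀ z₀ := by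
      apply hpos'
      rintro ⟨h1, h2, h3⟩
      exact hnz0 ⟨h2, h3⟩
    by_cases hcase : Q3 a b' c' d' e' f' x' y₀ z₀ < a
    · -- found smaller value: primitivize and recurse
      have hgz : Int.gcd y₀ z₀ ≠ 0 := by
        intro h
        exact hnz0 ⟨(Int.gcd_eq_zero_iff.mp h).1, (Int.gcd_eq_zero_iff.mp h).2⟩
      set G : ℕ := Int.gcd x' (Int.gcd y₀ z₀ : ℤ) with hG
      have hGz : G ≠ 0 := by
        intro h
        rw [hG] at h
        have := Int.gcd_eq_zero_iff.mp h
        have h2 := this.2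
        simp at h2
        exact hgz (Int.gcd_eq_zero_iff.mpr h2)
      obtain ⟨u1, hu1⟩ : ((G:ℕ):ℤ) ∣ x' := Int.gcd_dvd_left x' _
      have hdvd2 : ((G:ℕ):ℤ) ∣ y₀ := by
        refine dvd_trans (Int.gcd_dvd_right x' _) ?_
        exact_mod_cast Int.gcd_dvd_left y₀ z₀
      have hdvd3 : ((G:ℕ):ℤ) ∣ z₀ := by
        refine dvd_trans (Int.gcd_dvd_right x' _) ?_
        exact_mod_cast Int.gcd_dvd_right y₀ z₀
      obtain ⟨u2, hu2⟩ := hdvd2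
      obtain ⟨u3, hu3⟩ := hdvd3
      have hG1 : (1:ℤ) ≤ (G:ℤ) := by
        have : 0 < G := Nat.pos_of_ne_zero hGz
        exact_mod_cast this
      have hcop : Int.gcd u1 (Int.gcd u2 u3 : ℤ) = 1 := by
        have hgyz : Int.gcd y₀ z₀ = G * Int.gcd u2 u3 := by
          rw [hu2, hu3, Int.gcd_mul_left]
          simp
        have hEq : G = G * Int.gcd u1 (Int.gcd u2 u3 : ℤ) := by
          conv_lhs => rw [hG, hu1, hgyz]
          rw [Nat.cast_mul, Int.gcd_mul_left]
          simp
        have := Nat.eq_of_mul_eq_mul_left (Nat.pos_of_ne_zero hGz)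
          (show G * 1 = G * Int.gcd u1 (Int.gcd u2 u3 : ℤ) by rw [mul_one]; exact hEq)
        omega
      have hsc : Q3 a b' c' d' e' f' x' y₀ z₀
          = (G:ℤ)^2 * Q3 a b' c' d' e' f' u1 u2 u3 := by
        rw [hu1, hu2, hu3]; unfold Q3; ring
      have hQu : 0 < Q3 a b' c' d' e' f' u1 u2 u3 := by
        apply hpos'
        rintro ⟨h1, h2, h3⟩
        apply hnz0
        constructor
        · rw [hu2, h2]; ring
        · rw [hu3, h3]; ring
      have hQle : Q3 a b' c' d' e' f' u1 u2 u3 ≤ (k:ℤ) := by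
        have h1 : Q3 a b' c' d' e' f' u1 u2 u3 ≤ Q3 a b' c' d' e' f' x' y₀ z₀ := by
          rw [hsc]
          have hG2 : (1:ℤ) ≤ ((G:ℕ):ℤ)^2 := by nlinarith [hG1]
          calc Q3 a b' c' d' e' f' u1 u2 u3 = 1 * Q3 a b' c' d' e' f' u1 u2 u3 := (one_mul _).symm
          _ ≤ ((G:ℕ):ℤ)^2 * Q3 a b' c' d' e' f' u1 u2 u3 :=
            mul_le_mul_of_nonneg_right hG2 (le_of_lt hQu)
        omega
      obtain ⟨m12, m13, m22, m23, m32, m33, hdet⟩ := bc3 u1 u2 u3 hcop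
      apply repr3_transport hdet
      apply ih
      · intro X Y Z hnz
        rw [← Q3_sub]
        apply hpos'
        rintro ⟨h1, h2, h3⟩
        exact hnz (inj3 hdet h1 h2 h3)
      · rw [D3_sub, hdet, hD']; ring
      · exact hQle
    · -- minimum case: a = 1
      push_neg at hcase
      have hB0 : 0 < Q2 (a*b'-d'^2) (a*f'-d'*e') (a*c'-e'^2) y₀ z₀ := hBpos y₀ z₀ hnz0
      have h4B : 3*a^2 ≤ 4*Q2 (a*b'-d'^2) (a*f'-d'*e') (a*c'-e'^2) y₀ z₀ := by
        nlinarith [hkeyA, hx1, hx2, hcase, ha]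
      have ha1 : a = 1 := by
        nlinarith [h4B, hval, ha, hB0, sq_nonneg a,
          mul_le_mul h4B h4B (by positivity) (by positivity)]
      have hd0 : d' = 0 := by omega
      have he0 : e' = 0 := by omega
      subst ha1 hd0 he0
      have hb'pos : 0 < b' := by
        have := hA; nlinarith
      have hbc : b'*c' - f'^2 = 1 := by
        unfold D3 at hD'; linarith [hD']
      obtain ⟨p, q, r, s, hpq⟩ := binrep b'.toNat b' f' c' (Int.self_le_toNat _) hb'pos hbc
      refine ⟨1, 0, 0, 0, p, q, 0, r, s, ?_⟩
      intro x y z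
      have h1 := hpq y z
      unfold Q2 at h1
      unfold Q3
      linear_combination h1

lemma nat_coprime_of_bezout {a b : ℕ} (u v : ℤ) (h : u*(a:ℤ) + v*(b:ℤ) = 1) :
    Nat.Coprime a b := by
  have : IsCoprime (a:ℤ) (b:ℤ) := ⟨u, v, h⟩
  rwa [Int.isCoprime_iff_gcd_eq_one, Int.gcd_natCast_natCast] at this

lemma get_prime (N r : ℕ) (hN : 0 < N) (hco : Nat.Coprime r N) :
    ∃ q, q.Prime ∧ q > N ∧ q % N = r % N := by
  haveI : NeZero N := ⟨hN.ne'⟩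
  have hu : IsUnit ((r : ZMod N)) := (ZMod.isUnit_iff_coprime r N).mpr hco
  obtain ⟨q, hgt, hq, hmod⟩ := Nat.forall_exists_prime_gt_and_eq_mod hu N
  refine ⟨q, hq, hgt, ?_⟩
  rwa [ZMod.natCast_eq_natCast_iff] at hmod

lemma isSq_negD (q n D : ℕ) [Fact q.Prime] (hJ : jacobiSym (-(n:ℤ)) q = 1)
    (hnD : ((n : ZMod q)) * (D : ZMod q) = 1) : IsSquare (-(D : ZMod q)) := by
  obtain ⟨r, hr⟩ := ZMod.isSquare_of_jacobiSym_eq_one hJ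
  have hr' : (-(n : ZMod q)) = r * r := by
    have h2 : ((-(n:ℤ) : ℤ) : ZMod q) = r * r := hr
    push_cast at h2
    exact h2
  refine ⟨r * (D : ZMod q), ?_⟩
  linear_combination ((D : ZMod q)*(D : ZMod q)) * hr' + (D : ZMod q) * hnD

lemma finish1 (n q D : ℕ) (hq : q.Prime) (hnD : n * D = q + 1) (hD1 : 1 ≤ D)
    (hsq : IsSquare (-(D : ZMod q))) :
    ∃ Dz m β h : ℤ, 1 ≤ Dz ∧ 1 ≤ m ∧ m = (n:ℤ)*Dz - 1 ∧ h*m = β^2 + Dz := by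
  haveI : Fact q.Prime := ⟨hq⟩
  obtain ⟨r, hr⟩ := hsq
  have hdvd : (q:ℤ) ∣ ((r.val:ℤ)^2 + (D:ℤ)) := by
    have h0 : (((r.val:ℤ)^2 + (D:ℤ) : ℤ) : ZMod q) = 0 := by
      push_cast
      rw [ZMod.natCast_val, ZMod.cast_id]
      linear_combination -hr
    exact (ZMod.intCast_zmod_eq_zero_iff_dvd _ q).mp h0
  obtain ⟨h, hh⟩ := hdvd
  have hq2 : 2 ≤ q := hq.two_le
  have hc : ((n*D : ℕ) : ℤ) = ((q+1 : ℕ) : ℤ) := by rw [hnD]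
  push_cast at hc
  refine ⟨(D:ℤ), (q:ℤ), (r.val:ℤ), h, by exact_mod_cast hD1,
    by exact_mod_cast (by omega : 1 ≤ q), by linarith, by linear_combination -hh⟩

lemma finish2 (n q D : ℕ) (hq : q.Prime) (hq2 : q % 2 = 1) (hnD : n * D = 2*q + 1) (hD1 : 1 ≤ D)
    (hsq : IsSquare (-(D : ZMod q))) :
    ∃ Dz m β h : ℤ, 1 ≤ Dz ∧ 1 ≤ m ∧ m = (n:ℤ)*Dz - 1 ∧ h*m = β^2 + Dz := by
  haveI : Fact q.Prime := ⟨hq⟩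
  obtain ⟨r, hr⟩ := hsq
  -- first a root mod q
  have hq0 : (q:ℤ) ∣ ((r.val:ℤ)^2 + (D:ℤ)) := by
    have h0 : (((r.val:ℤ)^2 + (D:ℤ) : ℤ) : ZMod q) = 0 := by
      push_cast
      rw [ZMod.natCast_val, ZMod.cast_id]
      linear_combination -hr
    exact (ZMod.intCast_zmod_eq_zero_iff_dvd _ q).mp h0
  -- adjust parity
  set β : ℤ := if ((r.val:ℤ) + (D:ℤ)) % 2 = 0 then (r.val:ℤ) else (r.val:ℤ) + q with hβ
  have hqβ : (q:ℤ) ∣ (β^2 + (D:ℤ)) := by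
    rw [hβ]
    split_ifs with hpar
    · exact hq0
    · obtain ⟨w, hw⟩ := hq0
      exact ⟨w + 2*(r.val:ℤ) + q, by linear_combination hw⟩
  have h2β : (2:ℤ) ∣ (β^2 + (D:ℤ)) := by
    obtain ⟨j, hj⟩ := Int.even_mul_succ_self (β - 1)
    have hsq2 : β^2 = β + (j + j) - 2 + 2 := by nlinarith [hj]
    rw [hβ] at hsq2 ⊢
    split_ifs at hsq2 ⊢ with hpar
    · omega
    · omega
  have hdvd : (2*(q:ℤ)) ∣ (β^2 + (D:ℤ)) := by
    have hcop : IsCoprime (2:ℤ) (q:ℤ) := by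
      refine ⟨-((q:ℤ)/2), 1, ?_⟩
      have : (q:ℤ) % 2 = 1 := by omega
      omega
    exact hcop.mul_dvd h2β hqβ
  obtain ⟨h, hh⟩ := hdvd
  have hqq : 2 ≤ q := hq.two_le
  have hc : ((n*D : ℕ) : ℤ) = ((2*q+1 : ℕ) : ℤ) := by rw [hnD]
  push_cast at hc
  refine ⟨(D:ℤ), 2*(q:ℤ), β, h, by exact_mod_cast hD1,
    by exact_mod_cast (by omega : (1:ℤ) ≤ 2*(q:ℤ)), by linarith, by linear_combination -hh⟩

lemma neg_one_emod (n : ℕ) (hn : 2 ≤ n) : (-1 : ℤ) % (n:ℤ) = (n:ℤ) - 1 := by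
  have hn' : (2:ℤ) ≤ (n:ℤ) := by exact_mod_cast hn
  rw [show (-1:ℤ) = ((n:ℤ) - 1) + (n:ℤ)*(-1) by ring, Int.add_mul_emod_self_left]
  exact Int.emod_eq_of_lt (by omega) (by omega)

lemma caseA (n : ℕ) (hn : 2 ≤ n) (h4 : n % 4 = 1) :
    ∃ Dz m β h : ℤ, 1 ≤ Dz ∧ 1 ≤ m ∧ m = (n:ℤ)*Dz - 1 ∧ h*m = β^2 + Dz := by
  obtain ⟨w, hw⟩ : ∃ w, n = 4*w+1 := ⟨n/4, by omega⟩
  have hco : Nat.Coprime (2*n-1) (4*n) := by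
    have h1 : Nat.Coprime (2*n-1) 4 := by
      apply nat_coprime_of_bezout 1 (-(2*(w:ℤ)))
      have hc : ((2*n-1:ℕ):ℤ) = 8*(w:ℤ)+1 := by omega
      rw [hc]; push_cast; ring
    have h2 : Nat.Coprime (2*n-1) n := by
      apply nat_coprime_of_bezout (-1) 2
      have hc : ((2*n-1:ℕ):ℤ) = 2*((n:ℕ):ℤ)-1 := by omega
      rw [hc]; ring
    exact Nat.Coprime.mul_right h1 h2
  obtain ⟨q, hq, hqgt, hqmod⟩ := get_prime (4*n) (2*n-1) (by omega) hco
  rw [Nat.mod_eq_of_lt (by omega : 2*n-1 < 4*n)] at hqmod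
  have hq4 : q % 4 = 1 := by
    have h1 : q % 4 = (2*n-1) % 4 := by
      conv_lhs => rw [← Nat.mod_mod_of_dvd q (by omega : (4:ℕ) ∣ 4*n), hqmod]
    omega
  have hqn : q % n = n - 1 := by
    have h1 : q % n = (2*n-1) % n := by
      conv_lhs => rw [← Nat.mod_mod_of_dvd q (⟨4, by ring⟩ : n ∣ 4*n), hqmod]
    have h2 : (2*n-1) % n = n-1 := by
      rw [show 2*n-1 = n + (n-1) by omega, Nat.add_mod_left]
      exact Nat.mod_eq_of_lt (by omega)
    omega
  have hq2 : q % 2 = 1 := by omega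
  have hoddq : Odd q := by rw [Nat.odd_iff]; exact hq2
  have hoddn : Odd n := by rw [Nat.odd_iff]; omega
  have hqn' : q = n * (q/n) + (n-1) := by
    conv_lhs => rw [← Nat.div_add_mod q n, hqn]
  have hnD : n * (q/n+1) = q + 1 := by rw [Nat.mul_add, mul_one]; omega
  haveI : Fact q.Prime := ⟨hq⟩
  have hJn : jacobiSym ((n:ℤ)) q = 1 := by
    rw [jacobiSym.quadratic_reciprocity_one_mod_four' hoddn hq4]
    have hml : jacobiSym ((q:ℤ)) n = jacobiSym (-1) n := by
      apply jacobiSym.mod_left'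
      have e1 : ((q:ℕ):ℤ) % (n:ℤ) = (n:ℤ) - 1 := by
        rw [← Int.natCast_mod, hqn]; omega
      rw [e1, neg_one_emod n hn]
    rw [hml, jacobiSym.at_neg_one hoddn, ZMod.χ₄_nat_one_mod_four h4]
  have hJ : jacobiSym (-(n:ℤ)) q = 1 := by
    rw [jacobiSym.neg _ hoddq, ZMod.χ₄_nat_one_mod_four hq4, hJn]
    ring
  have hmod1 : ((n : ZMod q)) * ((q/n+1 : ℕ) : ZMod q) = 1 := by
    have hcast : (((n*(q/n+1) : ℕ)) : ZMod q) = ((q+1 : ℕ) : ZMod q) := by rw [hnD]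
    push_cast at hcast
    rw [ZMod.natCast_self] at hcast
    push_cast
    linear_combination hcast
  exact finish1 n q (q/n+1) hq hnD (Nat.succ_le_succ (Nat.zero_le _)) (isSq_negD q n (q/n+1) hJ hmod1)

lemma caseB (n : ℕ) (hn : 3 ≤ n) (h8 : n % 8 = 2 ∨ n % 8 = 6) :
    ∃ Dz m β h : ℤ, 1 ≤ Dz ∧ 1 ≤ m ∧ m = (n:ℤ)*Dz - 1 ∧ h*m = β^2 + Dz := by
  obtain ⟨w, hw⟩ : ∃ w, n = 4*w+2 := ⟨(n-2)/4, by omega⟩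
  have hw1 : 1 ≤ w := by omega
  have hco : Nat.Coprime (n-1) (4*n) := by
    have h1 : Nat.Coprime (n-1) 4 := by
      apply nat_coprime_of_bezout 1 (-(w:ℤ))
      have hc : ((n-1:ℕ):ℤ) = 4*(w:ℤ)+1 := by omega
      rw [hc]; ring
    have h2 : Nat.Coprime (n-1) n := by
      apply nat_coprime_of_bezout (-1) 1
      have hc : ((n-1:ℕ):ℤ) = ((n:ℕ):ℤ)-1 := by omega
      rw [hc]; ring
    exact Nat.Coprime.mul_right h1 h2
  obtain ⟨q, hq, hqgt, hqmod⟩ := get_prime (4*n) (n-1) (by omega) hco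
  rw [Nat.mod_eq_of_lt (by omega : n-1 < 4*n)] at hqmod
  have hq8 : q % 8 = (n-1) % 8 := by
    conv_lhs => rw [← Nat.mod_mod_of_dvd q (⟨2*w+1, by omega⟩ : (8:ℕ) ∣ 4*n), hqmod]
  have hq4 : q % 4 = 1 := by omega
  have hqn : q % n = n - 1 := by
    conv_lhs => rw [← Nat.mod_mod_of_dvd q (⟨4, by ring⟩ : n ∣ 4*n), hqmod]
    exact Nat.mod_eq_of_lt (by omega)
  -- the odd part n₀ = 2w+1
  have hqn0 : q % (2*w+1) = 2*w := by
    conv_lhs => rw [← Nat.mod_mod_of_dvd q (⟨8, by omega⟩ : (2*w+1) ∣ 4*n), hqmod]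
    rw [show n-1 = (2*w+1) + 2*w by omega, Nat.add_mod_left]
    exact Nat.mod_eq_of_lt (by omega)
  have hq2 : q % 2 = 1 := by omega
  have hoddq : Odd q := by rw [Nat.odd_iff]; exact hq2
  have hoddn0 : Odd (2*w+1) := by rw [Nat.odd_iff]; omega
  have hqn' : q = n * (q/n) + (n-1) := by
    conv_lhs => rw [← Nat.div_add_mod q n, hqn]
  have hnD : n * (q/n+1) = q + 1 := by rw [Nat.mul_add, mul_one]; omega
  haveI : Fact q.Prime := ⟨hq⟩
  have hJn0 : jacobiSym ((2*w+1 : ℕ):ℤ) q = ZMod.χ₄ (2*w+1 : ℕ) := by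
    rw [jacobiSym.quadratic_reciprocity_one_mod_four' hoddn0 hq4]
    have hml : jacobiSym ((q:ℤ)) (2*w+1) = jacobiSym (-1) (2*w+1) := by
      apply jacobiSym.mod_left'
      have e1 : ((q:ℕ):ℤ) % ((2*w+1:ℕ):ℤ) = ((2*w+1:ℕ):ℤ) - 1 := by
        rw [← Int.natCast_mod, hqn0]; push_cast; ring
      rw [e1, neg_one_emod (2*w+1) (by omega)]
    rw [hml, jacobiSym.at_neg_one hoddn0]
  have hsplit : jacobiSym (-(n:ℤ)) q
      = ZMod.χ₄ q * (ZMod.χ₈ q * jacobiSym ((2*w+1 : ℕ):ℤ) q) := by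
    rw [jacobiSym.neg _ hoddq]
    congr 1
    rw [show ((n:ℕ):ℤ) = 2 * ((2*w+1:ℕ):ℤ) by push_cast; omega]
    rw [jacobiSym.mul_left, jacobiSym.at_two hoddq]
  have hJ : jacobiSym (-(n:ℤ)) q = 1 := by
    rw [hsplit, hJn0, ZMod.χ₄_nat_one_mod_four hq4]
    rcases h8 with h2 | h6
    · have hq81 : q % 8 = 1 := by omega
      have hw4 : (2*w+1) % 4 = 1 := by omega
      rw [ZMod.χ₄_nat_one_mod_four hw4, ZMod.χ₈_nat_eq_if_mod_eight]
      simp [hq81, hq2]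
    · have hq85 : q % 8 = 5 := by omega
      have hw4 : (2*w+1) % 4 = 3 := by omega
      rw [ZMod.χ₄_nat_three_mod_four hw4, ZMod.χ₈_nat_eq_if_mod_eight]
      rw [hq85]
      norm_num [hq2]
  have hmod1 : ((n : ZMod q)) * ((q/n+1 : ℕ) : ZMod q) = 1 := by
    have hcast : (((n*(q/n+1) : ℕ)) : ZMod q) = ((q+1 : ℕ) : ZMod q) := by rw [hnD]
    push_cast at hcast
    rw [ZMod.natCast_self] at hcast
    push_cast
    linear_combination hcast
  exact finish1 n q (q/n+1) hq hnD (Nat.succ_le_succ (Nat.zero_le _)) (isSq_negD q n (q/n+1) hJ hmod1)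

lemma caseC (n : ℕ) (h8 : n % 8 = 3) :
    ∃ Dz m β h : ℤ, 1 ≤ Dz ∧ 1 ≤ m ∧ m = (n:ℤ)*Dz - 1 ∧ h*m = β^2 + Dz := by
  have hn : 3 ≤ n := by omega
  obtain ⟨v, hv⟩ : ∃ v, n = 8*v+3 := ⟨n/8, by omega⟩
  -- w = (n-1)/2 = 4v+1 ; residue r ≡ w (mod n), r ≡ 1 (mod 8)
  set w : ℕ := 4*v+1 with hwdef
  set r : ℕ := if v % 2 = 0 then w else w + 4*n with hrdef
  have hr8 : r % 8 = 1 := by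
    rw [hrdef, hwdef]
    split_ifs with hpar <;> omega
  have hrn : r % n = w := by
    rw [hrdef]
    split_ifs with hpar
    · exact Nat.mod_eq_of_lt (by omega)
    · rw [show w + 4*n = w + n*4 by ring, Nat.add_mul_mod_self_left]
      exact Nat.mod_eq_of_lt (by omega)
  have hrlt : r < 8*n := by rw [hrdef]; split_ifs <;> omega
  obtain ⟨l, hl⟩ : ∃ l, 2*r+1 = n*l := by
    rw [hrdef]
    refine ⟨if v % 2 = 0 then 1 else 9, ?_⟩
    split_ifs <;> omega
  have hco : Nat.Coprime r (8*n) := by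
    have h1 : Nat.Coprime r 8 := by
      apply nat_coprime_of_bezout 1 (-((r/8 : ℕ):ℤ))
      have hc : (r:ℤ) = 8*((r/8 : ℕ):ℤ) + 1 := by
        have := Nat.div_add_mod r 8
        omega
      rw [hc]; ring
    have h2 : Nat.Coprime r n := by
      apply nat_coprime_of_bezout (-2) (l:ℤ)
      have hc : 2*(r:ℤ)+1 = (n:ℤ)*(l:ℤ) := by exact_mod_cast congrArg (Nat.cast (R := ℤ)) hl
      linarith
    exact Nat.Coprime.mul_right h1 h2
  obtain ⟨q, hq, hqgt, hqmod⟩ := get_prime (8*n) r (by omega) hco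
  rw [Nat.mod_eq_of_lt hrlt] at hqmod
  have hq8 : q % 8 = 1 := by
    conv_lhs => rw [← Nat.mod_mod_of_dvd q (⟨n, by ring⟩ : (8:ℕ) ∣ 8*n), hqmod]
    exact hr8
  have hqn : q % n = w := by
    conv_lhs => rw [← Nat.mod_mod_of_dvd q (⟨8, by ring⟩ : n ∣ 8*n), hqmod]
    exact hrn
  have hq4 : q % 4 = 1 := by omega
  have hq2 : q % 2 = 1 := by omega
  have hoddq : Odd q := by rw [Nat.odd_iff]; exact hq2
  have hoddn : Odd n := by rw [Nat.odd_iff]; omega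
  have hqn' : q = n * (q/n) + w := by
    conv_lhs => rw [← Nat.div_add_mod q n, hqn]
  have hnD : n * (2*(q/n)+1) = 2*q + 1 := by
    have : n * (2*(q/n)+1) = 2*(n*(q/n)) + n := by ring
    omega
  haveI : Fact q.Prime := ⟨hq⟩
  -- J(w | n) = 1
  have hJw : jacobiSym ((w:ℕ):ℤ) n = 1 := by
    have hkey : ZMod.χ₈ n * jacobiSym ((w:ℕ):ℤ) n = jacobiSym (-1) n := by
      rw [← jacobiSym.at_two hoddn, ← jacobiSym.mul_left]
      apply jacobiSym.mod_left'
      have e1 : (2*((w:ℕ):ℤ)) % (n:ℤ) = (n:ℤ) - 1 := by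
        have hc : 2*((w:ℕ):ℤ) = (n:ℤ) - 1 := by push_cast; omega
        rw [hc]
        exact Int.emod_eq_of_lt (by push_cast; omega) (by omega)
      rw [e1, neg_one_emod n (by omega)]
    rw [jacobiSym.at_neg_one hoddn, ZMod.χ₄_nat_three_mod_four (by omega : n % 4 = 3)] at hkey
    have hχ8 : ZMod.χ₈ n = -1 := by
      rw [ZMod.χ₈_nat_eq_if_mod_eight]
      rw [h8]
      norm_num [(by omega : n % 2 = 1)]
    rw [hχ8] at hkey
    linarith
  have hJ : jacobiSym (-(n:ℤ)) q = 1 := by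
    rw [jacobiSym.neg _ hoddq, ZMod.χ₄_nat_one_mod_four hq4,
      jacobiSym.quadratic_reciprocity_one_mod_four' hoddn hq4]
    have hml : jacobiSym ((q:ℤ)) n = jacobiSym ((w:ℕ):ℤ) n := by
      apply jacobiSym.mod_left'
      rw [← Int.natCast_mod, hqn, ← Int.natCast_mod]
      rw [Nat.mod_eq_of_lt (by omega : w < n)]
    rw [hml, hJw]; ring
  have hmod1 : ((n : ZMod q)) * ((2*(q/n)+1 : ℕ) : ZMod q) = 1 := by
    have hcast : (((n*(2*(q/n)+1) : ℕ)) : ZMod q) = ((2*q+1 : ℕ) : ZMod q) := by rw [hnD]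
    push_cast at hcast
    rw [ZMod.natCast_self] at hcast
    push_cast
    linear_combination hcast
  exact finish2 n q (2*(q/n)+1) hq hq2 hnD (Nat.succ_le_succ (Nat.zero_le _))
    (isSq_negD q n (2*(q/n)+1) hJ hmod1)

theorem NT (n : ℕ) (hn : 2 ≤ n)
    (h8 : n % 8 = 1 ∨ n % 8 = 2 ∨ n % 8 = 3 ∨ n % 8 = 5 ∨ n % 8 = 6) :
    ∃ Dz m β h : ℤ, 1 ≤ Dz ∧ 1 ≤ m ∧ m = (n:ℤ)*Dz - 1 ∧ h*m = β^2 + Dz := by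
  rcases h8 with h | h | h | h | h
  · exact caseA n hn (by omega)
  · rcases (by omega : n = 2 ∨ 3 ≤ n) with h2 | h3
    · exact ⟨1, 1, 0, 1, by norm_num, by norm_num, by rw [h2]; norm_num, by norm_num⟩
    · exact caseB n h3 (Or.inl h)
  · exact caseC n h
  · exact caseA n hn (by omega)
  · exact caseB n (by omega) (Or.inr h)
-- GLUE (appended after core+nt)

lemma posdef_of_minors (a b c d e f : ℤ) (h1 : 0 < a) (h2 : 0 < a*b-d^2)
    (h3 : 0 < D3 a b c d e f) :
    ∀ x y z : ℤ, ¬(x = 0 ∧ y = 0 ∧ z = 0) → 0 < Q3 a b c d e f x y z := by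
  intro x y z hnz
  by_contra hle
  push_neg at hle
  have iA := aQ3_decomp a b c d e f x y z
  have iB : (a*b-d^2) * Q2 (a*b-d^2) (a*f-d*e) (a*c-e^2) y z
      = ((a*b-d^2)*y + (a*f-d*e)*z)^2 + (a * D3 a b c d e f) * z^2 := by
    unfold Q2 D3; ring
  have hB : Q2 (a*b-d^2) (a*f-d*e) (a*c-e^2) y z ≤ 0 := by
    nlinarith [sq_nonneg (a*x + d*y + e*z)]
  have hz : z = 0 := by
    by_contra hz0
    have hz2 : 0 < z^2 := by positivity
    nlinarith [sq_nonneg ((a*b-d^2)*y + (a*f-d*e)*z), mul_pos (mul_pos h1 h3) hz2]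
  subst hz
  have hy : y = 0 := by
    by_contra hy0
    have hAy : (a*b-d^2)*y ≠ 0 := mul_ne_zero (ne_of_gt h2) hy0
    have hpos2 : 0 < ((a*b-d^2)*y + (a*f-d*e)*0)^2 + (a * D3 a b c d e f) * 0^2 := by
      have : ((a*b-d^2)*y + (a*f-d*e)*0) = (a*b-d^2)*y := by ring
      rw [this]
      have := sq_pos_of_ne_zero hAy
      nlinarith [this]
    rw [← iB] at hpos2
    nlinarith [hpos2, hB, h2]
  subst hy
  have hx : x = 0 := by
    by_contra hx0
    have hax : a*x ≠ 0 := mul_ne_zero (ne_of_gt h1) hx0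
    have hQ20 : Q2 (a*b-d^2) (a*f-d*e) (a*c-e^2) 0 0 = 0 := by unfold Q2; ring
    have hpos2 : 0 < (a*x + d*0 + e*0)^2 := by
      have h9 : (a*x + d*0 + e*0) = a*x := by ring
      rw [h9]
      exact sq_pos_of_ne_zero hax
    nlinarith [hpos2, hle, h1, iA, hQ20]
  exact hnz ⟨hx, rfl, rfl⟩

/-- existence of a 3-square representation for `n ≥ 2`, `n ≢ 0,4,7 mod 8` -/
lemma sum3_core (n : ℕ) (hn : 2 ≤ n)
    (h8 : n % 8 = 1 ∨ n % 8 = 2 ∨ n % 8 = 3 ∨ n % 8 = 5 ∨ n % 8 = 6) :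
    ∃ x y z : ℤ, x^2+y^2+z^2 = (n:ℤ) := by
  obtain ⟨D, m, β, h, hD1, hm1, hmD, hhm⟩ := NT n hn h8
  have hn2 : (2:ℤ) ≤ (n:ℤ) := by exact_mod_cast hn
  have hh1 : 1 ≤ h := by nlinarith [sq_nonneg β]
  have hDet : D3 (n:ℤ) h m 1 0 β = 1 := by
    unfold D3; linear_combination (n:ℤ)*hhm - hmD
  have hmin2 : 0 < (n:ℤ)*h - 1^2 := by nlinarith
  have hpos := posdef_of_minors (n:ℤ) h m 1 0 β (by omega) hmin2 (by rw [hDet]; norm_num)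
  have hrep := tern_main (n:ℤ).toNat (n:ℤ) h m 1 0 β hpos hDet (Int.self_le_toNat _)
  obtain ⟨p1, p2, p3, q1, q2, q3, r1, r2, r3, hP⟩ := hrep
  have h100 := hP 1 0 0
  have hval : Q3 (n:ℤ) h m 1 0 β 1 0 0 = (n:ℤ) := by unfold Q3; ring
  rw [hval] at h100
  exact ⟨p1*1+p2*0+p3*0, q1*1+q2*0+q3*0, r1*1+r2*0+r3*0, h100.symm⟩

/-- 4^j(8k+7) is not a sum of three squares -/
lemma not_sq3 : ∀ (j u : ℕ), u % 8 = 7 →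
    ¬ ∃ x y z : ℤ, x^2+y^2+z^2 = ((2^(2*j)*u : ℕ) : ℤ) := by
  intro j
  induction j with
  | zero =>
    intro u hu ⟨x, y, z, h⟩
    have hcast : ((2^(2*0)*u : ℕ) : ℤ) = (u:ℕ) := by norm_num
    rw [hcast] at h
    have h8 : ((x : ZMod 8))^2 + (y : ZMod 8)^2 + (z : ZMod 8)^2 = ((u:ℕ) : ZMod 8) := by
      have := congrArg (Int.cast : ℤ → ZMod 8) h
      push_cast at this
      exact this
    have hu8 : ((u:ℕ) : ZMod 8) = 7 := by
      have : ((u:ℕ) : ZMod 8) = ((7:ℕ) : ZMod 8) :=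
        (ZMod.natCast_eq_natCast_iff u 7 8).mpr (show u % 8 = 7 % 8 by omega)
      rw [this]; rfl
    rw [hu8] at h8
    revert h8
    exact (by decide : ∀ A B C : ZMod 8, ¬ (A^2+B^2+C^2 = (7 : ZMod 8))) _ _ _
  | succ j ih =>
    intro u hu ⟨x, y, z, h⟩
    have hcast : ((2^(2*(j+1))*u : ℕ) : ℤ) = 4*((2^(2*j)*u : ℕ) : ℤ) := by
      push_cast
      rw [show 2*(j+1) = 2*j+2 by ring, pow_add]
      ring
    rw [hcast] at h
    rcases Int.even_or_odd x with ⟨a, ha⟩ | ⟨a, ha⟩ <;>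
      rcases Int.even_or_odd y with ⟨b, hb⟩ | ⟨b, hb⟩ <;>
      rcases Int.even_or_odd z with ⟨c, hc⟩ | ⟨c, hc⟩ <;>
      subst ha hb hc
    · -- all even
      apply ih u hu
      refine ⟨a, b, c, ?_⟩
      have h4 : 4*(a^2+b^2+c^2) = 4*((2^(2*j)*u : ℕ) : ℤ) := by linear_combination h
      omega
    all_goals {
      exfalso
      have h4 : ∃ s : ℤ, ∃ k : ℤ, (k = 1 ∨ k = 2 ∨ k = 3) ∧
          4*s + k = 4*((2^(2*j)*u : ℕ) : ℤ) := by
        first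
        | exact ⟨a^2+b^2+c^2+c, 1, by tauto, by linear_combination h⟩
        | exact ⟨a^2+b^2+c^2+b, 1, by tauto, by linear_combination h⟩
        | exact ⟨a^2+b^2+c^2+a, 1, by tauto, by linear_combination h⟩
        | exact ⟨a^2+b^2+c^2+b+c, 2, by tauto, by linear_combination h⟩
        | exact ⟨a^2+b^2+c^2+a+c, 2, by tauto, by linear_combination h⟩
        | exact ⟨a^2+b^2+c^2+a+b, 2, by tauto, by linear_combination h⟩
        | exact ⟨a^2+b^2+c^2+a+b+c, 3, by tauto, by linear_combination h⟩
      obtain ⟨s, k, hk, hs⟩ := h4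
      omega
    }

lemma pair_trick {u v wq n : ℤ} (h : wq^2 + u^2 + v^2 = n) (j : ℤ) (hp : u - v = j + j) :
    ∃ x y z : ℤ, x^2+2*y^2+2*z^2 = n := by
  refine ⟨wq, v + j, j, ?_⟩
  have hu : u = v + 2*j := by omega
  rw [hu] at h
  linear_combination h

lemma form_iff (n : ℤ) :
    (∃ x y z : ℤ, x^2+2*y^2+2*z^2 = n) ↔ (∃ x y z : ℤ, x^2+y^2+z^2 = n) := by
  constructor
  · rintro ⟨x, y, z, h⟩
    exact ⟨x, y+z, y-z, by linear_combination h⟩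
  · rintro ⟨x, y, z, h⟩
    rcases Int.even_or_odd x with ⟨a, ha⟩ | ⟨a, ha⟩ <;>
      rcases Int.even_or_odd y with ⟨b, hb⟩ | ⟨b, hb⟩ <;>
      rcases Int.even_or_odd z with ⟨c, hc⟩ | ⟨c, hc⟩
    · exact pair_trick (show z^2+x^2+y^2 = n by linear_combination h) (a-b) (show x - y = a - b + (a - b) by omega)
    · exact pair_trick (show z^2+x^2+y^2 = n by linear_combination h) (a-b) (show x - y = a - b + (a - b) by omega)
    · exact pair_trick (show y^2+x^2+z^2 = n by linear_combination h) (a-c) (show x - z = a - c + (a - c) by omega)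
    · exact pair_trick (show x^2+y^2+z^2 = n by linear_combination h) (b-c) (show y - z = b - c + (b - c) by omega)
    · exact pair_trick (show x^2+y^2+z^2 = n by linear_combination h) (b-c) (show y - z = b - c + (b - c) by omega)
    · exact pair_trick (show y^2+x^2+z^2 = n by linear_combination h) (a-c) (show x - z = a - c + (a - c) by omega)
    · exact pair_trick (show z^2+x^2+y^2 = n by linear_combination h) (a-b) (show x - y = a - b + (a - b) by omega)
    · exact pair_trick (show z^2+x^2+y^2 = n by linear_combination h) (a-b) (show x - y = a - b + (a - b) by omega)

/-- every positive n not of the excluded form is a sum of three squares -/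
lemma sum3_all : ∀ n : ℕ, 0 < n →
    (¬ ∃ e u : ℕ, Even e ∧ u % 8 = 7 ∧ n = 2^e * u) →
    ∃ x y z : ℤ, x^2+y^2+z^2 = (n:ℤ) := by
  intro n
  induction n using Nat.strong_induction_on with
  | _ n ih =>
    intro hn hnot
    by_cases h7 : n % 8 = 7
    · exact absurd ⟨0, n, Even.zero, h7, by norm_num⟩ hnot
    by_cases h4 : n % 4 = 0
    · have hm : 0 < n/4 := by omega
      have hnm : n = 4*(n/4) := by omega
      have hrec := ih (n/4) (by omega) hm (by
        rintro ⟨e, u, he, hu, hmeq⟩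
        apply hnot
        refine ⟨e+2, u, ?_, hu, ?_⟩
        · obtain ⟨t, ht⟩ := he; exact ⟨t+1, by omega⟩
        · rw [hnm, hmeq, pow_add]; ring)
      obtain ⟨x, y, z, hxyz⟩ := hrec
      refine ⟨2*x, 2*y, 2*z, ?_⟩
      have hc : (n:ℤ) = 4*((n/4 : ℕ):ℤ) := by omega
      rw [hc]; linear_combination 4*hxyz
    rcases (by omega : n = 1 ∨ 2 ≤ n) with h1 | h2
    · exact ⟨1, 0, 0, by rw [h1]; norm_num⟩
    · exact sum3_core n h2 (by omega)

theorem stmt_10 :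
    (∀ n : ℕ, 0 < n →
      ((¬ ∃ x y z : ℤ, x ^ 2 + 2 * y ^ 2 + 2 * z ^ 2 = (n : ℤ)) ↔
        ∃ e u : ℕ, Even e ∧ u % 8 = 7 ∧ n = 2 ^ e * u)) ∧
    IsLeast {n : ℕ | 0 < n ∧ ¬ ∃ x y z : ℤ, x ^ 2 + 2 * y ^ 2 + 2 * z ^ 2 = (n : ℤ)} 7 := by
  have main : ∀ n : ℕ, 0 < n →
      ((¬ ∃ x y z : ℤ, x ^ 2 + 2 * y ^ 2 + 2 * z ^ 2 = (n : ℤ)) ↔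
        ∃ e u : ℕ, Even e ∧ u % 8 = 7 ∧ n = 2 ^ e * u) := by
    intro n hn
    constructor
    · intro hnot
      by_contra hno
      apply hnot
      have := sum3_all n hn hno
      exact (form_iff (n:ℤ)).mpr this
    · rintro ⟨e, u, he, hu, rfl⟩ hrep
      obtain ⟨j, hj⟩ := he
      have hrep' : ∃ x y z : ℤ, x^2+y^2+z^2 = ((2^(2*j)*u : ℕ) : ℤ) := by
        apply (form_iff _).mp
        obtain ⟨x, y, z, hxyz⟩ := hrep
        exact ⟨x, y, z, by rw [show 2*j = e by omega]; linear_combination hxyz⟩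
      exact not_sq3 j u hu hrep'
  refine ⟨main, ⟨⟨by norm_num, ?_⟩, ?_⟩⟩
  · exact (main 7 (by norm_num)).mpr ⟨0, 7, Even.zero, by norm_num, by norm_num⟩
  · intro n hn
    obtain ⟨hn0, hnrep⟩ := hn
    by_contra hlt
    push_neg at hlt
    interval_cases n
    · exact hnrep ⟨1, 0, 0, by norm_num⟩
    · exact hnrep ⟨0, 1, 0, by norm_num⟩
    · exact hnrep ⟨1, 1, 0, by norm_num⟩
    · exact hnrep ⟨2, 0, 0, by norm_num⟩
    · exact hnrep ⟨1, 1, 1, by norm_num⟩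
    · exact hnrep ⟨2, 1, 0, by norm_num⟩
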